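/- Let G be a group, C a left-orderable subgroup with left ordering ≺, and suppose ≺' is a strict total ordering of the left cosets of C in G satisfying aC ≺' bC ⟹ caC ≺' cbC for all a, b, c ∈ G. Then the set P = {g ∈ C : 1 ≺ g} ∪ {g ∉ C : C ≺' gC} is the positive cone of a left ordering of G. -/

import Mathlib

/-- A positive cone of a left ordering of `G`. -/
def IsPosCone {G : Type*} [Group G] (P : Set G) : Prop :=
  (∀ a ∈ P, ∀ b ∈ P, a * b ∈ P) ∧
  (∀ g : G, g ∈ P ∨ g⁻¹ ∈ P ∨ g = 1) ∧
  (∀ g : G, g ∈ P → g⁻¹ ∉ P) ∧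
  (1 : G) ∉ P

/-- given a subgroup `C` with a left-invariant strict total order `ltC`, and a
left-invariant strict total order `lt'` on the left cosets `G ⧸ C`, the set of elements of
`C` positive for `ltC` together with elements `g ∉ C` with `C ≺' gC` is the positive cone
of a left ordering of `G`. -/
theorem statement6 {G : Type*} [Group G] (C : Subgroup G)
    (ltC : C → C → Prop) (hCsto : IsStrictTotalOrder C ltC)
    (hCleft : ∀ f g h : C, ltC g h → ltC (f * g) (f * h))
    (lt' : G ⧸ C → G ⧸ C → Prop) (hsto' : IsStrictTotalOrder (G ⧸ C) lt')
    (hleft' : ∀ a b c : G, lt' (a : G ⧸ C) (b : G ⧸ C) →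
      lt' ((c * a : G) : G ⧸ C) ((c * b : G) : G ⧸ C)) :
    IsPosCone ({g : G | ∃ h : g ∈ C, ltC 1 ⟨g, h⟩} ∪
      {g : G | g ∉ C ∧ lt' ((1 : G) : G ⧸ C) (g : G ⧸ C)}) := by
  have htrC : ∀ a b c : C, ltC a b → ltC b c → ltC a c := fun a b c => hCsto.trans a b c
  have hirC : ∀ a : C, ¬ ltC a a := hCsto.irrefl
  have htr' : ∀ a b c : G ⧸ C, lt' a b → lt' b c → lt' a c := fun a b c => hsto'.trans a b c
  have hir' : ∀ a : G ⧸ C, ¬ lt' a a := hsto'.irrefl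
  have hmem : ∀ g : G, g ∈ C → ((g : G) : G ⧸ C) = ((1 : G) : G ⧸ C) := by
    intro g hg
    exact QuotientGroup.eq.mpr (by simpa using C.inv_mem hg)
  refine ⟨?_, ?_, ?_, ?_⟩
  · rintro a (⟨ha, hpa⟩ | ⟨ha, hpa⟩) b (⟨hb, hpb⟩ | ⟨hb, hpb⟩)
    · left
      refine ⟨C.mul_mem ha hb, ?_⟩
      have h1 := hCleft ⟨a, ha⟩ 1 ⟨b, hb⟩ hpb
      rw [mul_one] at h1
      exact htrC _ _ _ hpa h1
    · right
      refine ⟨fun h => hb ((C.mul_mem_cancel_left ha).mp h), ?_⟩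
      have h1 := hleft' 1 b a hpb
      rw [mul_one] at h1
      rwa [hmem a ha] at h1
    · right
      refine ⟨fun h => ha ((C.mul_mem_cancel_right hb).mp h), ?_⟩
      have : ((a * b : G) : G ⧸ C) = ((a : G) : G ⧸ C) := by
        apply QuotientGroup.eq.mpr
        simpa using C.inv_mem hb
      rwa [this]
    · have h1 := hleft' 1 b a hpb
      rw [mul_one] at h1
      have h2 : lt' ((1 : G) : G ⧸ C) ((a * b : G) : G ⧸ C) := htr' _ _ _ hpa h1
      right
      refine ⟨fun h => ?_, h2⟩
      rw [hmem _ h] at h2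
      exact hir' _ h2
  · intro g
    by_cases hg : g ∈ C
    · rcases (show ltC 1 ⟨g, hg⟩ ∨ (1 : C) = ⟨g, hg⟩ ∨ ltC ⟨g, hg⟩ 1 by have := hCsto.trichotomous 1 ⟨g, hg⟩; tauto) with h | h | h
      · exact Or.inl (Or.inl ⟨hg, h⟩)
      · exact Or.inr (Or.inr (congrArg Subtype.val h.symm))
      · have h1 := hCleft ⟨g, hg⟩⁻¹ ⟨g, hg⟩ 1 h
        rw [mul_one, inv_mul_cancel] at h1
        exact Or.inr (Or.inl (Or.inl ⟨C.inv_mem hg, h1⟩))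
    · have hne : ((1 : G) : G ⧸ C) ≠ (g : G ⧸ C) := by
        intro h
        exact hg (by simpa using QuotientGroup.eq.mp h)
      rcases (show lt' ((1 : G) : G ⧸ C) (g : G ⧸ C) ∨ ((1 : G) : G ⧸ C) = (g : G ⧸ C) ∨ lt' (g : G ⧸ C) ((1 : G) : G ⧸ C) by have := hsto'.trichotomous ((1 : G) : G ⧸ C) (g : G ⧸ C); tauto) with h | h | h
      · exact Or.inl (Or.inr ⟨hg, h⟩)
      · exact absurd h hne
      · have h1 := hleft' g 1 g⁻¹ h
        rw [inv_mul_cancel, mul_one] at h1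
        exact Or.inr (Or.inl (Or.inr ⟨fun hm => hg (by simpa using C.inv_mem hm), h1⟩))
  · rintro g (⟨hg, hpg⟩ | ⟨hg, hpg⟩) (⟨hg', hpg'⟩ | ⟨hg', hpg'⟩)
    · have h1 := hCleft ⟨g, hg⟩ 1 ⟨g⁻¹, hg'⟩ hpg'
      rw [mul_one] at h1
      have h2 : (⟨g, hg⟩ : C) * ⟨g⁻¹, hg'⟩ = 1 := by ext; simp
      rw [h2] at h1
      exact hirC _ (htrC _ _ _ hpg h1)
    · exact hg' (C.inv_mem hg)
    · exact hg (by simpa using C.inv_mem hg')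
    · have h1 := hleft' 1 g⁻¹ g hpg'
      rw [mul_one, mul_inv_cancel] at h1
      exact hir' _ (htr' _ _ _ hpg h1)
  · rintro (⟨h, hp⟩ | ⟨h, _⟩)
    · exact hirC 1 hp
    · exact h C.one_mem
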